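/- Let T>0 and 0<ε≤M be fixed constants, let f be twice continuously differentiable on [-1/ε,T], let g be continuous on [-1/ε,T] with ε ≤ g(t) ≤ M for all t ∈ [-1/ε,T], and let x ∈ C¹([0,T]) solve dx/dt = f(t) - g(t)x(t) on (0,T) with x(0)=x⁰. Define the delayed quasi-steady state approximation x̃(t) = f(t-τ(t))/g(t-τ(t)) with delay τ(t) = 1/g(t). Then for all t ∈ [0,T], |x(t) - x̃(t)| ≤ 2(1/ε - 1/M)·max_{s∈[-1/ε,t]}|f(s)| + (1/ε³)·max_{s∈[-1/ε,t]}|f''(s)| + Q(t), where Q(t) = [|x⁰| + (1/ε)·max_{[-1/ε,t]}|f| + (t/ε)·max_{[-1/ε,t]}|f'| + (1/(2ε))·(1/ε² + t²)·max_{[-1/ε,t]}|f''|]·exp(-εt). -/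

import Mathlib

open Set intervalIntegral MeasureTheory

set_option maxHeartbeats 1000000


lemma dqssa_taylor_bound {lo hi C : ℝ} {f f' f'' : ℝ → ℝ}
    (hf' : ∀ u ∈ Set.Icc lo hi, HasDerivAt f (f' u) u)
    (hf'' : ∀ u ∈ Set.Icc lo hi, HasDerivAt f' (f'' u) u)
    (hf''c : ContinuousOn f'' (Set.Icc lo hi))
    (hC : ∀ u ∈ Set.Icc lo hi, |f'' u| ≤ C)
    {a s : ℝ} (ha : a ∈ Set.Icc lo hi) (hs : s ∈ Set.Icc lo hi) :
    |f s - f a - f' a * (s - a)| ≤ C * (s - a) ^ 2 / 2 := by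
  have hsub : Set.uIcc a s ⊆ Set.Icc lo hi := Set.uIcc_subset_Icc ha hs
  have hf'c : ContinuousOn f' (Set.Icc lo hi) :=
    fun u hu => (hf'' u hu).continuousAt.continuousWithinAt
  have hC0 : 0 ≤ C := le_trans (abs_nonneg _) (hC a ha)
  -- step 1 : |f' u - f' a| ≤ C * |u - a| on uIcc a s
  have step1 : ∀ u ∈ Set.uIcc a s, |f' u - f' a| ≤ C * |u - a| := by
    intro u hu
    have hsub2 : Set.uIcc a u ⊆ Set.Icc lo hi :=
      (Set.uIcc_subset_uIcc Set.left_mem_uIcc hu).trans hsub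
    have hftc : ∫ v in a..u, f'' v = f' u - f' a :=
      integral_eq_sub_of_hasDerivAt (fun v hv => hf'' v (hsub2 hv))
        ((hf''c.mono hsub2).intervalIntegrable)
    rw [← hftc]
    have := intervalIntegral.norm_integral_le_of_norm_le_const
      (f := f'') (C := C) (a := a) (b := u)
      (fun v hv => by
        simpa [Real.norm_eq_abs] using hC v (hsub2 (Set.uIoc_subset_uIcc hv)))
    simpa [Real.norm_eq_abs, abs_sub_comm u a] using this
  -- step 2 : f s - f a - f' a * (s - a) = ∫ u in a..s, (f' u - f' a)
  have step2 : f s - f a - f' a * (s - a) = ∫ u in a..s, (f' u - f' a) := by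
    have hftc : ∫ u in a..s, (f' u - f' a) =
        (f s - f' a * s) - (f a - f' a * a) := by
      apply integral_eq_sub_of_hasDerivAt (f := fun u => f u - f' a * u)
      · intro u hu
        have h := (hf' u (hsub hu)).sub ((hasDerivAt_id u).const_mul (f' a))
        refine h.congr_deriv (Eq.symm ?_)
        ring
      · exact ((hf'c.mono hsub).sub continuousOn_const).intervalIntegrable
    rw [hftc]; ring
  rw [step2]
  have hint1 : IntervalIntegrable (fun u => |f' u - f' a|) volume a s :=
    (((hf'c.mono hsub).sub continuousOn_const).abs).intervalIntegrable
  rcases le_total a s with hle | hle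
  · have h1 : |∫ u in a..s, (f' u - f' a)| ≤ ∫ u in a..s, |f' u - f' a| :=
      intervalIntegral.abs_integral_le_integral_abs hle
    have h2 : (∫ u in a..s, |f' u - f' a|) ≤ ∫ u in a..s, C * (u - a) := by
      apply intervalIntegral.integral_mono_on hle hint1
      · exact (continuousOn_const.mul (continuousOn_id.sub continuousOn_const)).intervalIntegrable
      · intro u hu
        have := step1 u (by rw [Set.uIcc_of_le hle]; exact hu)
        rwa [abs_of_nonneg (by linarith [hu.1] : (0:ℝ) ≤ u - a)] at this
    have h3 : (∫ u in a..s, C * (u - a)) = C * (s - a) ^ 2 / 2 := by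
      have : ∫ u in a..s, C * (u - a) =
          (C * (s - a) ^ 2 / 2) - (C * (a - a) ^ 2 / 2) := by
        apply integral_eq_sub_of_hasDerivAt (f := fun u => C * (u - a) ^ 2 / 2)
        · intro u _
          have h := ((((hasDerivAt_id u).sub_const a).pow 2).const_mul C).div_const 2
          refine h.congr_deriv (Eq.symm ?_)
          norm_num
          ring
        · exact (continuousOn_const.mul (continuousOn_id.sub continuousOn_const)).intervalIntegrable
      rw [this]; ring
    calc |∫ u in a..s, (f' u - f' a)| ≤ ∫ u in a..s, |f' u - f' a| := h1
      _ ≤ ∫ u in a..s, C * (u - a) := h2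
      _ = C * (s - a) ^ 2 / 2 := h3
  · have hsym : |∫ u in a..s, (f' u - f' a)| = |∫ u in s..a, (f' u - f' a)| := by
      rw [intervalIntegral.integral_symm a s, abs_neg]
    rw [hsym]
    have h1 : |∫ u in s..a, (f' u - f' a)| ≤ ∫ u in s..a, |f' u - f' a| :=
      intervalIntegral.abs_integral_le_integral_abs hle
    have h2 : (∫ u in s..a, |f' u - f' a|) ≤ ∫ u in s..a, C * (a - u) := by
      apply intervalIntegral.integral_mono_on hle (hint1.symm)
      · exact (continuousOn_const.mul (continuousOn_const.sub continuousOn_id)).intervalIntegrable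
      · intro u hu
        have := step1 u (by rw [Set.uIcc_of_ge hle]; exact hu)
        rwa [abs_of_nonpos (by linarith [hu.2] : u - a ≤ (0:ℝ)), neg_sub] at this
    have h3 : (∫ u in s..a, C * (a - u)) = C * (s - a) ^ 2 / 2 := by
      have : ∫ u in s..a, C * (a - u) =
          (-(C * (a - a) ^ 2 / 2)) - (-(C * (a - s) ^ 2 / 2)) := by
        apply integral_eq_sub_of_hasDerivAt (f := fun u => -(C * (a - u) ^ 2 / 2))
        · intro u _
          have h := (((((hasDerivAt_id u).const_sub a).pow 2).const_mul C).div_const 2).neg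
          refine h.congr_deriv (Eq.symm ?_)
          norm_num
          ring
        · exact (continuousOn_const.mul (continuousOn_const.sub continuousOn_id)).intervalIntegrable
      rw [this]; ring
    calc |∫ u in s..a, (f' u - f' a)| ≤ ∫ u in s..a, |f' u - f' a| := h1
      _ ≤ ∫ u in s..a, C * (a - u) := h2
      _ = C * (s - a) ^ 2 / 2 := h3

lemma dqssa_exp_linear (c d s : ℝ) :
    HasDerivAt (fun u => Real.exp (c * u - d)) (c * Real.exp (c * s - d)) s := by
  have h := (((hasDerivAt_id s).const_mul c).sub_const d).exp
  simpa [mul_comm] using h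



/-- Error estimate for the delayed quasi-steady state approximation (D-QSSA).
Let `0 < ε ≤ M`, `f ∈ C²([-1/ε,T])`, `g` continuous with `ε ≤ g ≤ M` on `[-1/ε,T]`,
and let `x ∈ C¹([0,T])` solve `dx/dt = f(t) - g(t)x(t)` on `(0,T)` with `x(0) = x⁰`.
With `x̃(t) = f(t-τ(t))/g(t-τ(t))`, `τ(t) = 1/g(t)`, for all `t ∈ [0,T]`:
`|x(t) - x̃(t)| ≤ 2(1/ε - 1/M)·max|f| + (1/ε³)·max|f''| + Q(t)`, where
`Q(t) = [|x⁰| + (1/ε)·max|f| + (t/ε)·max|f'| + (1/(2ε))·(1/ε² + t²)·max|f''|]·exp(-εt)`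
and all maxima are taken over `[-1/ε,t]`. -/
theorem dqssa_error_estimate
    (T ε M x0 : ℝ) (hT : 0 < T) (hε : 0 < ε) (hεM : ε ≤ M)
    (f f' f'' g x : ℝ → ℝ)
    (hf' : ∀ s ∈ Set.Icc (-(1/ε)) T, HasDerivAt f (f' s) s)
    (hf'' : ∀ s ∈ Set.Icc (-(1/ε)) T, HasDerivAt f' (f'' s) s)
    (hf''c : ContinuousOn f'' (Set.Icc (-(1/ε)) T))
    (hg : ContinuousOn g (Set.Icc (-(1/ε)) T))
    (hgl : ∀ s ∈ Set.Icc (-(1/ε)) T, ε ≤ g s)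
    (hgu : ∀ s ∈ Set.Icc (-(1/ε)) T, g s ≤ M)
    (hxc : ContinuousOn x (Set.Icc 0 T))
    (hode : ∀ s ∈ Set.Ioo (0:ℝ) T, HasDerivAt x (f s - g s * x s) s)
    (hx0 : x 0 = x0) :
    ∀ t ∈ Set.Icc (0:ℝ) T,
      |x t - f (t - 1 / g t) / g (t - 1 / g t)|
        ≤ 2 * (1 / ε - 1 / M) * sSup ((fun s => |f s|) '' Set.Icc (-(1/ε)) t)
          + (1 / ε ^ 3) * sSup ((fun s => |f'' s|) '' Set.Icc (-(1/ε)) t)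
          + (|x0|
              + (1 / ε) * sSup ((fun s => |f s|) '' Set.Icc (-(1/ε)) t)
              + (t / ε) * sSup ((fun s => |f' s|) '' Set.Icc (-(1/ε)) t)
              + (1 / (2 * ε)) * (1 / ε ^ 2 + t ^ 2)
                  * sSup ((fun s => |f'' s|) '' Set.Icc (-(1/ε)) t))
            * Real.exp (-ε * t) := by
  intro t ht
  obtain ⟨ht0, htT⟩ := ht
  have hM : (0:ℝ) < M := lt_of_lt_of_le hε hεM
  have hεinv : (0:ℝ) < 1/ε := by positivity
  have hneg : -(1/ε) ≤ 0 := by linarith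
  set D := Set.Icc (-(1/ε)) T with hD
  have htD : t ∈ D := ⟨by linarith, htT⟩
  have h0D : (0:ℝ) ∈ D := ⟨hneg, le_of_lt hT⟩
  have hsub : Set.Icc (-(1/ε)) t ⊆ D := Set.Icc_subset_Icc le_rfl htT
  set γ := g t with hγdef
  have hγε : ε ≤ γ := hgl t htD
  have hγM : γ ≤ M := hgu t htD
  have hγ0 : (0:ℝ) < γ := lt_of_lt_of_le hε hγε
  have hγinv : 1/γ ≤ 1/ε := one_div_le_one_div_of_le hε hγε
  set a := t - 1/γ with hadef
  have hat : a ≤ t := by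
    have : (0:ℝ) < 1/γ := by positivity
    simp only [hadef]; linarith
  have halo : -(1/ε) ≤ a := by simp only [hadef]; linarith
  have haD : a ∈ D := ⟨halo, le_trans hat htT⟩
  have haI : a ∈ Set.Icc (-(1/ε)) t := ⟨halo, hat⟩
  have htI : t ∈ Set.Icc (-(1/ε)) t := ⟨by linarith, le_rfl⟩
  have hga : ε ≤ g a := hgl a haD
  have hgaM : g a ≤ M := hgu a haD
  have hga0 : (0:ℝ) < g a := lt_of_lt_of_le hε hga
  -- continuity of f, f'
  have hfc : ContinuousOn f D := fun s hs => (hf' s hs).continuousAt.continuousWithinAt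
  have hf'c : ContinuousOn f' D := fun s hs => (hf'' s hs).continuousAt.continuousWithinAt
  -- suprema
  set F0 := sSup ((fun s => |f s|) '' Set.Icc (-(1/ε)) t) with hF0def
  set F1 := sSup ((fun s => |f' s|) '' Set.Icc (-(1/ε)) t) with hF1def
  set F2 := sSup ((fun s => |f'' s|) '' Set.Icc (-(1/ε)) t) with hF2def
  have hbddF0 : BddAbove ((fun s => |f s|) '' Set.Icc (-(1/ε)) t) :=
    (isCompact_Icc.image_of_continuousOn ((hfc.mono hsub).abs)).bddAbove
  have hbddF1 : BddAbove ((fun s => |f' s|) '' Set.Icc (-(1/ε)) t) :=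
    (isCompact_Icc.image_of_continuousOn ((hf'c.mono hsub).abs)).bddAbove
  have hbddF2 : BddAbove ((fun s => |f'' s|) '' Set.Icc (-(1/ε)) t) :=
    (isCompact_Icc.image_of_continuousOn ((hf''c.mono hsub).abs)).bddAbove
  have hF0le : ∀ s ∈ Set.Icc (-(1/ε)) t, |f s| ≤ F0 := fun s hs => le_csSup hbddF0 ⟨s, hs, rfl⟩
  have hF1le : ∀ s ∈ Set.Icc (-(1/ε)) t, |f' s| ≤ F1 := fun s hs => le_csSup hbddF1 ⟨s, hs, rfl⟩
  have hF2le : ∀ s ∈ Set.Icc (-(1/ε)) t, |f'' s| ≤ F2 := fun s hs => le_csSup hbddF2 ⟨s, hs, rfl⟩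
  have hF0nn : 0 ≤ F0 := le_trans (abs_nonneg _) (hF0le t htI)
  have hF1nn : 0 ≤ F1 := le_trans (abs_nonneg _) (hF1le t htI)
  have hF2nn : 0 ≤ F2 := le_trans (abs_nonneg _) (hF2le t htI)
  -- the primitive of g
  set G := fun u : ℝ => ∫ s in (0:ℝ)..u, g s with hGdef
  have hgi : ∀ u ∈ D, ∀ v ∈ D, IntervalIntegrable g volume u v := fun u hu v hv =>
    (hg.mono (Set.uIcc_subset_Icc hu hv)).intervalIntegrable
  have hGcont : ContinuousOn G (Set.Icc 0 t) := by
    have h := intervalIntegral.continuousOn_primitive_interval' (hgi 0 h0D t htD)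
      Set.left_mem_uIcc
    rwa [Set.uIcc_of_le ht0] at h
  have hGd : ∀ s ∈ Set.Ioo (0:ℝ) t, HasDerivAt G (g s) s := by
    intro s hs
    have hsD : s ∈ Set.Ioo (-(1/ε)) T := ⟨by linarith [hs.1], lt_of_lt_of_le hs.2 htT⟩
    have hmeas := (hg.mono Set.Ioo_subset_Icc_self).stronglyMeasurableAtFilter
      (μ := volume) isOpen_Ioo s hsD
    have hca : ContinuousAt g s := (hg.mono Set.Ioo_subset_Icc_self).continuousAt
      (Ioo_mem_nhds hsD.1 hsD.2)
    exact intervalIntegral.integral_hasDerivAt_right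
      (hgi 0 h0D s ⟨le_of_lt hsD.1, le_of_lt hsD.2⟩) hmeas hca
  have hG0 : G 0 = 0 := intervalIntegral.integral_same
  -- solution representation
  have key : ∫ s in (0:ℝ)..t, Real.exp (G s) * f s = Real.exp (G t) * x t - x0 := by
    have h := intervalIntegral.integral_eq_sub_of_hasDeriv_right_of_le ht0
      (f := fun s => Real.exp (G s) * x s) (f' := fun s => Real.exp (G s) * f s)
      (((Real.continuous_exp.comp_continuousOn hGcont)).mul
        (hxc.mono (Set.Icc_subset_Icc le_rfl htT)))
      (fun s hs => by
        have hd := ((hGd s hs).exp.mul (hode s ⟨hs.1, lt_of_lt_of_le hs.2 htT⟩))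
        have : HasDerivAt (fun u => Real.exp (G u) * x u) (Real.exp (G s) * f s) s := by
          refine hd.congr_deriv (Eq.symm ?_); ring
        exact this.hasDerivWithinAt)
      (((Real.continuous_exp.comp_continuousOn hGcont).mul
        (hfc.mono (fun u hu => ⟨by linarith [hu.1], le_trans hu.2 htT⟩))).intervalIntegrable_of_Icc ht0)
    rw [h]; simp [hG0, hx0]
  have hexpinv : Real.exp (-G t) * Real.exp (G t) = 1 := by
    rw [← Real.exp_add]; simp
  set I := ∫ s in (0:ℝ)..t, Real.exp (G s - G t) * f s with hIdef
  have hxt : x t = Real.exp (-G t) * x0 + I := by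
    have h1 : I = Real.exp (-G t) * ∫ s in (0:ℝ)..t, Real.exp (G s) * f s := by
      rw [← intervalIntegral.integral_const_mul]
      apply intervalIntegral.integral_congr
      intro s _
      simp only
      rw [Real.exp_sub, Real.exp_neg]
      ring
    rw [h1, key, mul_sub, ← mul_assoc, hexpinv, one_mul]
    ring
  -- bounds on the exponent
  have hGbound : ∀ s ∈ Set.Icc (0:ℝ) t, ε * (t - s) ≤ G t - G s ∧ G t - G s ≤ M * (t - s) := by
    intro s hs
    have hsD : s ∈ D := ⟨by linarith [hs.1], le_trans hs.2 htT⟩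
    have hGts : G t - G s = ∫ u in s..t, g u := by
      have h := intervalIntegral.integral_add_adjacent_intervals
        (hgi 0 h0D s hsD) (hgi s hsD t htD)
      simp only [hGdef]
      linarith [h]
    constructor
    · rw [hGts]
      have h1 : (∫ _ in s..t, (ε:ℝ)) ≤ ∫ u in s..t, g u :=
        intervalIntegral.integral_mono_on hs.2 intervalIntegrable_const
          (hgi s hsD t htD)
          (fun u hu => hgl u ⟨by linarith [hu.1, hs.1], le_trans hu.2 htT⟩)
      simpa [intervalIntegral.integral_const, smul_eq_mul, mul_comm] using h1
    · rw [hGts]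
      have h1 : (∫ u in s..t, g u) ≤ ∫ _ in s..t, (M:ℝ) :=
        intervalIntegral.integral_mono_on hs.2 (hgi s hsD t htD)
          intervalIntegrable_const
          (fun u hu => hgu u ⟨by linarith [hu.1, hs.1], le_trans hu.2 htT⟩)
      simpa [intervalIntegral.integral_const, smul_eq_mul, mul_comm] using h1
  have hGt : ε * t ≤ G t := by
    have := (hGbound 0 ⟨le_rfl, ht0⟩).1
    rw [hG0] at this; simpa using this
  -- step B : compare with frozen coefficient
  have h0tD : Set.Icc (0:ℝ) t ⊆ D := fun u hu => ⟨by linarith [hu.1], le_trans hu.2 htT⟩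
  have h0tI : Set.Icc (0:ℝ) t ⊆ Set.Icc (-(1/ε)) t := fun u hu => ⟨by linarith [hu.1], hu.2⟩
  set J := ∫ s in (0:ℝ)..t, Real.exp (γ*s - γ*t) * f s with hJdef
  have hcEg : ContinuousOn (fun s => Real.exp (G s - G t)) (Set.Icc (0:ℝ) t) :=
    Real.continuous_exp.comp_continuousOn (hGcont.sub continuousOn_const)
  have hcEγ : Continuous fun s : ℝ => Real.exp (γ*s - γ*t) := by
    exact Real.continuous_exp.comp ((continuous_const.mul continuous_id).sub continuous_const)
  have hintI : IntervalIntegrable (fun s => Real.exp (G s - G t) * f s) volume 0 t :=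
    (hcEg.mul (hfc.mono h0tD)).intervalIntegrable_of_Icc ht0
  have hintJ : IntervalIntegrable (fun s => Real.exp (γ*s - γ*t) * f s) volume 0 t :=
    ((hcEγ.continuousOn).mul (hfc.mono h0tD)).intervalIntegrable_of_Icc ht0
  have hIJ : |I - J| ≤ F0 * (1/ε - 1/M) := by
    have hIJint : I - J = ∫ s in (0:ℝ)..t,
        (Real.exp (G s - G t) * f s - Real.exp (γ*s-γ*t) * f s) :=
      (intervalIntegral.integral_sub hintI hintJ).symm
    set B := fun s : ℝ => (Real.exp (ε*s - ε*t) - Real.exp (M*s - M*t)) * F0 with hBdef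
    have hcB : Continuous B := by
      apply Continuous.mul _ continuous_const
      exact (Real.continuous_exp.comp ((continuous_const.mul continuous_id).sub continuous_const)).sub
        (Real.continuous_exp.comp ((continuous_const.mul continuous_id).sub continuous_const))
    have hpt : ∀ s ∈ Set.Icc (0:ℝ) t,
        |Real.exp (G s - G t) * f s - Real.exp (γ*s-γ*t) * f s| ≤ B s := by
      intro s hs
      have hGb := hGbound s hs
      have h1 : Real.exp (M*s - M*t) ≤ Real.exp (G s - G t) :=
        Real.exp_le_exp.mpr (by linarith [hGb.2])
      have h2 : Real.exp (G s - G t) ≤ Real.exp (ε*s - ε*t) :=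
        Real.exp_le_exp.mpr (by linarith [hGb.1])
      have h3 : Real.exp (M*s - M*t) ≤ Real.exp (γ*s - γ*t) :=
        Real.exp_le_exp.mpr (by nlinarith [mul_nonneg (sub_nonneg.2 hγM) (sub_nonneg.2 hs.2)])
      have h4 : Real.exp (γ*s - γ*t) ≤ Real.exp (ε*s - ε*t) :=
        Real.exp_le_exp.mpr (by nlinarith [mul_nonneg (sub_nonneg.2 hγε) (sub_nonneg.2 hs.2)])
      have h5 : |Real.exp (G s - G t) - Real.exp (γ*s - γ*t)|
          ≤ Real.exp (ε*s-ε*t) - Real.exp (M*s-M*t) := abs_le.mpr ⟨by linarith, by linarith⟩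
      have heq : Real.exp (G s - G t) * f s - Real.exp (γ*s-γ*t) * f s
          = (Real.exp (G s - G t) - Real.exp (γ*s-γ*t)) * f s := by ring
      rw [heq, abs_mul]
      exact mul_le_mul h5 (hF0le s (h0tI hs)) (abs_nonneg _) (by linarith)
    have habs : |I - J| ≤ ∫ s in (0:ℝ)..t,
        |Real.exp (G s - G t) * f s - Real.exp (γ*s-γ*t) * f s| := by
      rw [hIJint]
      exact intervalIntegral.abs_integral_le_integral_abs ht0
    have hmono : (∫ s in (0:ℝ)..t,
        |Real.exp (G s - G t) * f s - Real.exp (γ*s-γ*t) * f s|) ≤ ∫ s in (0:ℝ)..t, B s := by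
      apply intervalIntegral.integral_mono_on ht0 _ (hcB.intervalIntegrable 0 t) hpt
      exact ((hcEg.mul (hfc.mono h0tD)).sub
        ((hcEγ.continuousOn).mul (hfc.mono h0tD))).abs.intervalIntegrable_of_Icc ht0
    have hBval : (∫ s in (0:ℝ)..t, B s) =
        ((Real.exp (ε*t-ε*t)/ε - Real.exp (M*t-M*t)/M) * F0)
          - ((Real.exp (ε*0-ε*t)/ε - Real.exp (M*0-M*t)/M) * F0) := by
      apply intervalIntegral.integral_eq_sub_of_hasDerivAt
        (f := fun s => (Real.exp (ε*s-ε*t)/ε - Real.exp (M*s-M*t)/M) * F0)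
      · intro s _
        have h := (((dqssa_exp_linear ε (ε*t) s).div_const ε).sub
          ((dqssa_exp_linear M (M*t) s).div_const M)).mul_const F0
        refine h.congr_deriv (Eq.symm ?_)
        field_simp
        simp only [hBdef]
        ring_nf
      · exact hcB.intervalIntegrable 0 t
    have hΨ0 : 0 ≤ (Real.exp (ε*0-ε*t)/ε - Real.exp (M*0-M*t)/M) * F0 := by
      apply mul_nonneg _ hF0nn
      have he : Real.exp (M*0-M*t) ≤ Real.exp (ε*0-ε*t) :=
        Real.exp_le_exp.mpr (by nlinarith [mul_nonneg (sub_nonneg.2 hεM) ht0])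
      have hd := mul_le_mul he (one_div_le_one_div_of_le hε hεM)
        (by positivity) (Real.exp_pos _).le
      rw [mul_one_div, mul_one_div] at hd
      linarith
    have hΨt : (Real.exp (ε*t-ε*t)/ε - Real.exp (M*t-M*t)/M) * F0 = (1/ε - 1/M) * F0 := by
      rw [sub_self, sub_self, Real.exp_zero]
    calc |I - J| ≤ _ := habs
      _ ≤ ∫ s in (0:ℝ)..t, B s := hmono
      _ ≤ F0 * (1/ε - 1/M) := by rw [hBval, hΨt]; linarith
  -- step C : Taylor expansion around a with frozen coefficient
  have hγne : γ ≠ 0 := ne_of_gt hγ0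
  have hcLin : Continuous fun s : ℝ => f a + f' a * (s - a) :=
    continuous_const.add (continuous_const.mul (continuous_id.sub continuous_const))
  have hlin : (∫ s in (0:ℝ)..t, Real.exp (γ*s - γ*t) * (f a + f' a * (s - a)))
      = f a / γ - Real.exp (γ*0 - γ*t) * (f a / γ + f' a * (0 - t) / γ) := by
    have hval := intervalIntegral.integral_eq_sub_of_hasDerivAt
      (f := fun s => Real.exp (γ*s - γ*t) * (f a / γ + f' a * (s - t) / γ))
      (f' := fun s => Real.exp (γ*s - γ*t) * (f a + f' a * (s - a)))
      (fun s _ => by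
        have h2 : HasDerivAt (fun u : ℝ => f a / γ + f' a * (u - t) / γ) (f' a / γ) s := by
          have h := ((((hasDerivAt_id s).sub_const t).const_mul (f' a)).div_const γ).const_add
            (f a / γ)
          simpa using h
        have h := (dqssa_exp_linear γ (γ*t) s).mul h2
        refine h.congr_deriv (Eq.symm ?_)
        simp only [hadef]
        field_simp
        ring)
      ((hcEγ.mul hcLin).intervalIntegrable 0 t)
    rw [hval]
    have e0 : Real.exp (γ*t - γ*t) = 1 := by
      rw [show γ*t - γ*t = 0 by ring, Real.exp_zero]
    rw [e0]
    ring
  set R := ∫ s in (0:ℝ)..t, Real.exp (γ*s - γ*t) * (f s - f a - f' a * (s - a)) with hRdef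
  have hcφ : ContinuousOn (fun s => f s - f a - f' a * (s - a)) (Set.Icc (0:ℝ) t) :=
    ((hfc.mono h0tD).sub continuousOn_const).sub
      (continuous_const.mul (continuous_id.sub continuous_const)).continuousOn
  have hintR : IntervalIntegrable (fun s => Real.exp (γ*s - γ*t) * (f s - f a - f' a * (s - a)))
      volume 0 t := ((hcEγ.continuousOn).mul hcφ).intervalIntegrable_of_Icc ht0
  have hintLin : IntervalIntegrable (fun s => Real.exp (γ*s - γ*t) * (f a + f' a * (s - a)))
      volume 0 t := (hcEγ.mul hcLin).intervalIntegrable 0 t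
  have hJsplit : J = R + (f a / γ - Real.exp (γ*0 - γ*t) * (f a / γ + f' a * (0 - t) / γ)) := by
    rw [← hlin, hRdef, ← intervalIntegral.integral_add hintR hintLin]
    apply intervalIntegral.integral_congr
    intro s _
    simp only
    ring
  -- bound on the remainder R
  have hRbound : |R| ≤ F2 / (2 * ε^3) := by
    have hpt : ∀ s ∈ Set.Icc (0:ℝ) t,
        |Real.exp (γ*s - γ*t) * (f s - f a - f' a * (s - a))|
          ≤ Real.exp (γ*s - γ*t) * (F2 * (s - a)^2 / 2) := by
      intro s hs
      rw [abs_mul, abs_of_pos (Real.exp_pos _)]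
      apply mul_le_mul_of_nonneg_left _ (Real.exp_pos _).le
      exact dqssa_taylor_bound (fun u hu => hf' u (hsub hu)) (fun u hu => hf'' u (hsub hu))
        (hf''c.mono hsub) hF2le haI (h0tI hs)
    have hcB2 : Continuous fun s : ℝ => Real.exp (γ*s - γ*t) * (F2 * (s - a)^2 / 2) := by
      apply hcEγ.mul
      exact (continuous_const.mul ((continuous_id.sub continuous_const).pow 2)).div_const 2
    have h1 : |R| ≤ ∫ s in (0:ℝ)..t,
        |Real.exp (γ*s - γ*t) * (f s - f a - f' a * (s - a))| := by
      rw [hRdef]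
      exact intervalIntegral.abs_integral_le_integral_abs ht0
    have h2 : (∫ s in (0:ℝ)..t, |Real.exp (γ*s - γ*t) * (f s - f a - f' a * (s - a))|)
        ≤ ∫ s in (0:ℝ)..t, Real.exp (γ*s - γ*t) * (F2 * (s - a)^2 / 2) := by
      apply intervalIntegral.integral_mono_on ht0 _ (hcB2.intervalIntegrable 0 t) hpt
      exact (((hcEγ.continuousOn).mul hcφ).abs).intervalIntegrable_of_Icc ht0
    have h3 : (∫ s in (0:ℝ)..t, Real.exp (γ*s - γ*t) * (F2 * (s - a)^2 / 2))
        = Real.exp (γ*t - γ*t) * (F2/2 * ((t-a)^2/γ - 2*(t-a)/γ^2 + 2/γ^3))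
          - Real.exp (γ*0 - γ*t) * (F2/2 * ((0-a)^2/γ - 2*(0-a)/γ^2 + 2/γ^3)) := by
      apply intervalIntegral.integral_eq_sub_of_hasDerivAt
        (f := fun s => Real.exp (γ*s - γ*t) * (F2/2 * ((s-a)^2/γ - 2*(s-a)/γ^2 + 2/γ^3)))
      · intro s _
        have hq : HasDerivAt (fun u : ℝ => F2/2 * ((u-a)^2/γ - 2*(u-a)/γ^2 + 2/γ^3))
            (F2/2 * (2*(s-a)/γ - 2/γ^2)) s := by
          have hq1 := (((hasDerivAt_id s).sub_const a).pow 2).div_const γ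
          have hq2 := (((hasDerivAt_id s).sub_const a).const_mul 2).div_const (γ^2)
          have hq3 := ((hq1.sub hq2).add_const (2/γ^3)).const_mul (F2/2)
          refine hq3.congr_deriv (Eq.symm ?_)
          simp only [id_eq]
          push_cast
          ring
        have h := (dqssa_exp_linear γ (γ*t) s).mul hq
        refine h.congr_deriv (Eq.symm ?_)
        field_simp
        ring
      · exact hcB2.intervalIntegrable 0 t
    have hta : t - a = 1/γ := by simp [hadef]
    have hχt : Real.exp (γ*t - γ*t) * (F2/2 * ((t-a)^2/γ - 2*(t-a)/γ^2 + 2/γ^3))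
        = F2 / (2*γ^3) := by
      have ht' : γ*t - γ*t = 0 := by ring
      rw [ht', Real.exp_zero, hta]
      field_simp
      ring
    have hχ0 : 0 ≤ Real.exp (γ*0 - γ*t) * (F2/2 * ((0-a)^2/γ - 2*(0-a)/γ^2 + 2/γ^3)) := by
      apply mul_nonneg (Real.exp_pos _).le
      apply mul_nonneg (by positivity)
      have haγ : a + 1/γ = t := by simp [hadef]
      have expand : (0-a)^2/γ - 2*(0-a)/γ^2 + 2/γ^3 = ((a + 1/γ)^2 + 1/γ^2)/γ := by
        field_simp
        ring
      rw [expand, haγ]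
      positivity
    have hle : F2 / (2*γ^3) ≤ F2 / (2*ε^3) := by
      apply div_le_div_of_nonneg_left hF2nn (by positivity)
      have := pow_le_pow_left₀ hε.le hγε 3
      linarith
    calc |R| ≤ _ := h1
      _ ≤ _ := h2
      _ ≤ F2 / (2*γ^3) := by rw [h3, hχt]; linarith
      _ ≤ F2 / (2*ε^3) := hle
  -- bound on the exponentially decaying part of J
  have hJa : |J - f a / γ| ≤ F2/(2*ε^3) + Real.exp (-ε*t) * ((F0 + t*F1)/ε) := by
    have heq : J - f a / γ = R - Real.exp (γ*0 - γ*t) * (f a / γ + f' a * (0 - t) / γ) := by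
      rw [hJsplit]; ring
    have hexple : Real.exp (γ*0 - γ*t) ≤ Real.exp (-ε*t) :=
      Real.exp_le_exp.mpr (by nlinarith [mul_nonneg (sub_nonneg.2 hγε) ht0])
    have hfrac : |f a / γ + f' a * (0 - t) / γ| ≤ (F0 + t*F1)/ε := by
      have e1 : f a / γ + f' a * (0 - t) / γ = (f a - t * f' a)/γ := by ring
      rw [e1, abs_div, abs_of_pos hγ0]
      apply div_le_div₀ (by nlinarith [hF0le a haI, hF1le a haI, abs_nonneg (f' a)]) _ hε hγε
      calc |f a - t * f' a| ≤ |f a| + |t * f' a| := abs_sub _ _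
        _ = |f a| + t * |f' a| := by rw [abs_mul, abs_of_nonneg ht0]
        _ ≤ F0 + t * F1 := by
            have := hF1le a haI
            have := hF0le a haI
            nlinarith
    have h2 : |Real.exp (γ*0 - γ*t) * (f a / γ + f' a * (0 - t) / γ)|
        ≤ Real.exp (-ε*t) * ((F0 + t*F1)/ε) := by
      rw [abs_mul, abs_of_pos (Real.exp_pos _)]
      apply mul_le_mul hexple hfrac (abs_nonneg _) (Real.exp_pos _).le
    calc |J - f a / γ| = |R - Real.exp (γ*0 - γ*t) * (f a / γ + f' a * (0 - t) / γ)| := by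
          rw [heq]
      _ ≤ |R| + |Real.exp (γ*0 - γ*t) * (f a / γ + f' a * (0 - t) / γ)| := abs_sub _ _
      _ ≤ F2/(2*ε^3) + Real.exp (-ε*t) * ((F0 + t*F1)/ε) := add_le_add hRbound h2
  -- final assembly
  have hdecomp : x t - f a / g a
      = Real.exp (-G t) * x0 + (I - J) + (J - f a / γ) + (f a / γ - f a / g a) := by
    rw [hxt]; ring
  have h1 : |Real.exp (-G t) * x0| ≤ Real.exp (-ε*t) * |x0| := by
    rw [abs_mul, abs_of_pos (Real.exp_pos _)]
    exact mul_le_mul_of_nonneg_right (Real.exp_le_exp.mpr (by linarith)) (abs_nonneg _)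
  have h4 : |f a / γ - f a / g a| ≤ F0 * (1/ε - 1/M) := by
    have e1 : f a / γ - f a / g a = f a * (1/γ - 1/(g a)) := by
      field_simp
    rw [e1, abs_mul]
    apply mul_le_mul (hF0le a haI) _ (abs_nonneg _) hF0nn
    have i1 : 1/M ≤ 1/γ := one_div_le_one_div_of_le hγ0 hγM
    have i2 : 1/M ≤ 1/(g a) := one_div_le_one_div_of_le hga0 hgaM
    have i3 : 1/(g a) ≤ 1/ε := one_div_le_one_div_of_le hε hga
    exact abs_le.mpr ⟨by linarith, by linarith⟩
  have htri : |x t - f a / g a| ≤ |Real.exp (-G t) * x0| + |I - J| + |J - f a / γ|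
      + |f a / γ - f a / g a| := by
    rw [hdecomp]
    calc |Real.exp (-G t) * x0 + (I - J) + (J - f a / γ) + (f a / γ - f a / g a)|
        ≤ |Real.exp (-G t) * x0 + (I - J) + (J - f a / γ)| + |f a / γ - f a / g a| :=
          abs_add_le _ _
      _ ≤ |Real.exp (-G t) * x0 + (I - J)| + |J - f a / γ| + |f a / γ - f a / g a| := by
          have := abs_add_le (Real.exp (-G t) * x0 + (I - J)) (J - f a / γ)
          linarith
      _ ≤ |Real.exp (-G t) * x0| + |I - J| + |J - f a / γ| + |f a / γ - f a / g a| := by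
          have := abs_add_le (Real.exp (-G t) * x0) (I - J)
          linarith
  have k1 : F2/(2*ε^3) ≤ (1/ε^3)*F2 := by
    rw [one_div, ← div_eq_inv_mul]
    apply div_le_div_of_nonneg_left hF2nn (by positivity)
    linarith [pow_pos hε 3]
  have k2 : 0 ≤ (1/(2*ε)) * (1/ε^2 + t^2) * F2 * Real.exp (-ε*t) := by positivity
  have kexp : 0 < Real.exp (-ε*t) := Real.exp_pos _
  calc |x t - f a / g a| ≤ _ := htri
    _ ≤ Real.exp (-ε*t) * |x0| + F0 * (1/ε - 1/M)
        + (F2/(2*ε^3) + Real.exp (-ε*t) * ((F0 + t*F1)/ε)) + F0 * (1/ε - 1/M) :=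
      add_le_add (add_le_add (add_le_add h1 hIJ) hJa) h4
    _ ≤ 2 * (1/ε - 1/M) * F0 + (1/ε^3) * F2
        + (|x0| + (1/ε)*F0 + (t/ε)*F1 + (1/(2*ε)) * (1/ε^2 + t^2) * F2) * Real.exp (-ε*t) := by
      have expand : Real.exp (-ε*t) * ((F0 + t*F1)/ε)
          = (1/ε)*F0*Real.exp (-ε*t) + (t/ε)*F1*Real.exp (-ε*t) := by
        field_simp
      rw [expand]
      linarith [k1, k2]
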